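/- For a, b ∈ ℝ let M(a,b) be the 4×4 real symmetric matrix [[1,0,0,a/4],[0,1/4,a/4,0],[0,a/4,b,0],[a/4,0,0,1/4]], viewed in Her₂(ℂ)⊗Her₂(ℂ). Then M(a,b) is block positive (i.e., (x⊗y)* M(a,b) (x⊗y) ≥ 0 for all x, y ∈ ℂ²) if and only if (a,b) ∈ S₁ ∪ S₂, where S₁ = {(a,b) | (b+1−a²)² ≤ 4b} and S₂ = {(a,b) | (b+1−a²)² ≥ 4b, b ≥ 0, a² ≤ b+1}. -/
import Mathlib

open Matrix Kronecker ComplexOrder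

/-- The matrix `M(a,b) = E₁₁ ⊗ diag(1,1/4) + (E₁₂+E₂₁) ⊗ [[0,a/4],[a/4,0]]
+ E₂₂ ⊗ diag(b,1/4)` in `Her₂(ℂ) ⊗ Her₂(ℂ)`. -/
noncomputable def Mab (a b : ℝ) : Matrix (Fin 2 × Fin 2) (Fin 2 × Fin 2) ℂ :=
  (!![1, 0; 0, 0] : Matrix (Fin 2) (Fin 2) ℂ) ⊗ₖ !![1, 0; 0, 1/4] +
    (!![0, 1; 1, 0] : Matrix (Fin 2) (Fin 2) ℂ) ⊗ₖ !![0, (a : ℂ)/4; (a : ℂ)/4, 0] +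
    (!![0, 0; 0, 1] : Matrix (Fin 2) (Fin 2) ℂ) ⊗ₖ !![(b : ℂ), 0; 0, 1/4]

lemma quad_eq (a b : ℝ) (x y : Fin 2 → ℂ) :
    star (fun p : Fin 2 × Fin 2 => x p.1 * y p.2) ⬝ᵥ
        (Mab a b).mulVec (fun p : Fin 2 × Fin 2 => x p.1 * y p.2) =
      ((Complex.normSq (x 0) * Complex.normSq (y 0)
        + b * Complex.normSq (x 1) * Complex.normSq (y 0)
        + (Complex.normSq (x 0) + Complex.normSq (x 1)) * Complex.normSq (y 1) / 4
        + a * ((starRingEnd ℂ) (x 0) * x 1).re * ((starRingEnd ℂ) (y 0) * y 1).re : ℝ) : ℂ) := by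
  have hre : ∀ z : ℂ, ((z.re : ℝ) : ℂ) = (z + (starRingEnd ℂ) z) / 2 := by
    intro z; rw [Complex.add_conj]; push_cast; ring
  have hns : ∀ z : ℂ, ((Complex.normSq z : ℝ) : ℂ) = (starRingEnd ℂ) z * z := by
    intro z; rw [← Complex.mul_conj]; ring
  push_cast
  rw [hre, hre, hns, hns, hns, hns]
  simp only [Mab, dotProduct, mulVec, Fintype.sum_prod_type, Fin.sum_univ_two,
    Matrix.add_apply, kroneckerMap_apply, Pi.star_apply, RCLike.star_def,
    Matrix.cons_val', Matrix.cons_val_zero, Matrix.cons_val_one, Matrix.head_cons,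
    Matrix.head_fin_const, Matrix.empty_val', Matrix.cons_val_fin_one, Matrix.of_apply,
    _root_.map_mul, Complex.conj_conj]
  ring

lemma key_ineq (a b P Q : ℝ) (hP : 0 ≤ P) (hQ : 0 ≤ Q)
    (h : (b + 1 - a ^ 2) ^ 2 ≤ 4 * b ∨
      (4 * b ≤ (b + 1 - a ^ 2) ^ 2 ∧ 0 ≤ b ∧ a ^ 2 ≤ b + 1)) :
    a ^ 2 * (P * Q) ≤ (P + b * Q) * (P + Q) := by
  rcases h with h | ⟨-, hb, hk⟩
  · nlinarith [sq_nonneg (2 * P + (b + 1 - a ^ 2) * Q), sq_nonneg Q, mul_nonneg hP hQ]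
  · nlinarith [mul_nonneg hP hQ, sq_nonneg Q, sq_nonneg P]

lemma pos_aux (a b P Q S T c d : ℝ) (hP : 0 ≤ P) (hQ : 0 ≤ Q) (hS : 0 ≤ S) (hT : 0 ≤ T)
    (hc : c ^ 2 ≤ P * Q) (hd : d ^ 2 ≤ S * T) (hb : 0 ≤ b)
    (key : a ^ 2 * (P * Q) ≤ (P + b * Q) * (P + Q)) :
    0 ≤ P * S + b * Q * S + (P + Q) * T / 4 + a * c * d := by
  have hST : 0 ≤ S * T := mul_nonneg hS hT
  have hX : 0 ≤ (P + b * Q) * S + (P + Q) * T / 4 := by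
    have h1 : 0 ≤ (P + b * Q) * S := mul_nonneg (by nlinarith) hS
    have h2 : 0 ≤ (P + Q) * T := mul_nonneg (by linarith) hT
    linarith
  have hcd2 : c ^ 2 * d ^ 2 ≤ (P * Q) * (S * T) := by
    nlinarith [sq_nonneg c, sq_nonneg d, mul_nonneg hP hQ, mul_nonneg hS hT]
  have h1 : (a * c * d) ^ 2 ≤ ((P + b * Q) * (P + Q)) * (S * T) := by
    have t1 : 0 ≤ (S * T) * ((P + b * Q) * (P + Q) - a ^ 2 * (P * Q)) :=
      mul_nonneg hST (by linarith)
    have t2 : 0 ≤ a ^ 2 * ((P * Q) * (S * T) - c ^ 2 * d ^ 2) :=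
      mul_nonneg (sq_nonneg a) (by linarith)
    nlinarith [t1, t2]
  have h2 : ((P + b * Q) * (P + Q)) * (S * T)
      ≤ ((P + b * Q) * S + (P + Q) * T / 4) ^ 2 := by
    nlinarith [sq_nonneg ((P + b * Q) * S - (P + Q) * T / 4)]
  nlinarith [hX, h1, h2]

set_option maxHeartbeats 1000000 in
theorem Mab_blockPositive_iff (a b : ℝ) :
    (∀ x y : Fin 2 → ℂ,
        0 ≤ star (fun p : Fin 2 × Fin 2 => x p.1 * y p.2) ⬝ᵥ
            (Mab a b).mulVec (fun p : Fin 2 × Fin 2 => x p.1 * y p.2)) ↔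
      ((b + 1 - a ^ 2) ^ 2 ≤ 4 * b ∨
        (4 * b ≤ (b + 1 - a ^ 2) ^ 2 ∧ 0 ≤ b ∧ a ^ 2 ≤ b + 1)) := by
  constructor
  · intro h
    have hb : 0 ≤ b := by
      have h0 := h ![0, 1] ![1, 0]
      rw [quad_eq] at h0
      simp only [Matrix.cons_val_zero, Matrix.cons_val_one, Matrix.head_cons] at h0
      norm_num [Complex.zero_le_real] at h0
      linarith
    by_cases h1 : (b + 1 - a ^ 2) ^ 2 ≤ 4 * b
    · exact Or.inl h1
    · refine Or.inr ⟨le_of_not_ge h1, hb, ?_⟩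
      by_contra hk'
      push_neg at hk'
      have hdisc : 4 * b < (b + 1 - a ^ 2) ^ 2 := lt_of_not_ge h1
      set k : ℝ := a ^ 2 - b - 1 with hk_def
      have hkpos : 0 < k := by simp only [hk_def]; linarith
      have hk2 : 4 * b < k ^ 2 := by nlinarith [hdisc]
      set r : ℝ := k / 2 with hr_def
      have hr : 0 < r := by positivity
      set A : ℝ := r + b with hA_def
      have hA : 0 < A := by simp only [hA_def]; linarith
      set u : ℝ := Real.sqrt r with hu_def
      have hu2 : u ^ 2 = r := Real.sq_sqrt hr.le
      set s : ℝ := |a| * u / (2 * A) with hs_def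
      set ε : ℝ := if 0 ≤ a then (-1 : ℝ) else 1 with hε_def
      have hε2 : ε ^ 2 = 1 := by simp only [hε_def]; split <;> norm_num
      have haε : a * ε = -|a| := by
        simp only [hε_def]; split_ifs with h'
        · rw [abs_of_nonneg h']; ring
        · push_neg at h'; rw [abs_of_neg h']; ring
      have h0 := h ![(u : ℂ), (ε : ℂ)] ![(s : ℂ), 1]
      rw [quad_eq] at h0
      simp only [Matrix.cons_val_zero, Matrix.cons_val_one, Matrix.head_cons,
        Complex.normSq_ofReal, Complex.normSq_one, Complex.conj_ofReal, mul_one,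
        ← Complex.ofReal_mul, Complex.ofReal_re, Complex.one_re] at h0
      rw [Complex.zero_le_real] at h0
      -- h0 : 0 ≤ u*u*(s*s) + b*(ε*ε)*(s*s) + (u*u + ε*ε)*1/4 + a*(u*ε)*(s*1) (roughly)
      have ha2 : a ^ 2 = k + b + 1 := by simp only [hk_def]; ring
      have habs2 : |a| ^ 2 = a ^ 2 := sq_abs a
      have hεε : ε * ε = 1 := by nlinarith [hε2]
      have haa : |a| * u * (|a| * u) = a ^ 2 * r := by
        have e : |a| * u * (|a| * u) = |a| ^ 2 * u ^ 2 := by ring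
        rw [e, habs2, hu2]
      have hs2 : s * s = a ^ 2 * r / (4 * A ^ 2) := by
        rw [hs_def, div_mul_div_comm, haa]; ring_nf
      have hus : a * ε * (u * s) = -(a ^ 2 * r) / (2 * A) := by
        have e : -|a| * (u * (|a| * u / (2 * A))) = -(|a| * u * (|a| * u)) / (2 * A) := by
          ring
        rw [hs_def, haε, e, haa]
      rw [show a * (u * ε) * s = a * ε * (u * s) from by ring] at h0
      rw [show u * u = r from by rw [← hu2]; ring, hεε, hs2, hus] at h0
      -- h0 : 0 ≤ r * (a²r/(4A²)) + b * 1 * (a²r/(4A²)) + (r + 1)/4 + -(a²r)/(2A)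
      have hclear : 0 ≤ (r * (a ^ 2 * r / (4 * A ^ 2)) + b * 1 * (a ^ 2 * r / (4 * A ^ 2))
          + (r + 1) / 4 + -(a ^ 2 * r) / (2 * A)) * (4 * A ^ 2) :=
        mul_nonneg h0 (by positivity)
      have hApos : (A : ℝ) ≠ 0 := ne_of_gt hA
      have hpoly : (r * (a ^ 2 * r / (4 * A ^ 2)) + b * 1 * (a ^ 2 * r / (4 * A ^ 2))
          + (r + 1) / 4 + -(a ^ 2 * r) / (2 * A)) * (4 * A ^ 2)
          = (r + b) * (a ^ 2 * r) + (r + 1) * A ^ 2 - a ^ 2 * r * (2 * A) := by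
        field_simp
        ring
      have hfinal : (r + b) * (a ^ 2 * r) + (r + 1) * A ^ 2 - a ^ 2 * r * (2 * A)
          = A * (b - k ^ 2 / 4) := by
        rw [hA_def, hr_def, ha2]; ring
      rw [hpoly, hfinal] at hclear
      have hneg : A * (b - k ^ 2 / 4) < 0 :=
        mul_neg_of_pos_of_neg hA (by linarith)
      exact absurd hclear (not_le.mpr hneg)
  · intro h x y
    rw [quad_eq]
    rw [Complex.zero_le_real]
    have key := key_ineq a b (Complex.normSq (x 0)) (Complex.normSq (x 1))
      (Complex.normSq_nonneg _) (Complex.normSq_nonneg _) h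
    have hb : 0 ≤ b := by
      rcases h with h | ⟨-, hb, -⟩
      · nlinarith [sq_nonneg (b + 1 - a ^ 2)]
      · exact hb
    have hc : ((starRingEnd ℂ) (x 0) * x 1).re ^ 2 ≤ Complex.normSq (x 0) * Complex.normSq (x 1) := by
      have := Complex.normSq_apply ((starRingEnd ℂ) (x 0) * x 1)
      have h2 : Complex.normSq ((starRingEnd ℂ) (x 0) * x 1)
          = Complex.normSq (x 0) * Complex.normSq (x 1) := by
        rw [Complex.normSq_mul, Complex.normSq_conj]
      nlinarith [sq_nonneg ((starRingEnd ℂ) (x 0) * x 1).im]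
    have hd : ((starRingEnd ℂ) (y 0) * y 1).re ^ 2 ≤ Complex.normSq (y 0) * Complex.normSq (y 1) := by
      have := Complex.normSq_apply ((starRingEnd ℂ) (y 0) * y 1)
      have h2 : Complex.normSq ((starRingEnd ℂ) (y 0) * y 1)
          = Complex.normSq (y 0) * Complex.normSq (y 1) := by
        rw [Complex.normSq_mul, Complex.normSq_conj]
      nlinarith [sq_nonneg ((starRingEnd ℂ) (y 0) * y 1).im]
    have := pos_aux a b (Complex.normSq (x 0)) (Complex.normSq (x 1))
      (Complex.normSq (y 0)) (Complex.normSq (y 1))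
      ((starRingEnd ℂ) (x 0) * x 1).re ((starRingEnd ℂ) (y 0) * y 1).re
      (Complex.normSq_nonneg _) (Complex.normSq_nonneg _)
      (Complex.normSq_nonneg _) (Complex.normSq_nonneg _) hc hd hb key
    linarith
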